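/- Let (X, ρ) be a complete metric space of sequences x = (x_i)_{i∈ℤ} with x_i in closed balls W_i = {x ∈ ℝ^m : |x - a_i| ≤ r} and ρ(x,x') = sup_i |x_i - x'_i|. Suppose Φ : X → X is of the form (Φx)_i = φ_i(∂_{x_i}(u_{i-1}(x_{i-1},x_i) + u_i(x_i,x_{i+1}))), where each φ_i is λ-Lipschitz with φ_i(0) = a_i, and each u_i is C² with ‖u_i‖_{C²} ≤ ε. If 2λε < r and 2λε < 1, then Φ maps the ball B = {x : ρ(x,a) ≤ 2λε} into itself and is a contraction on B with constant 2λε; consequently Φ has a unique fixed point x* with ρ(x*, a) ≤ 2λε. -/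

import Mathlib

open Real

section Helpers

variable {m : ℕ}

local notation "E" => EuclideanSpace ℝ (Fin m)

private lemma comp_inr_norm (L : (EuclideanSpace ℝ (Fin m) × EuclideanSpace ℝ (Fin m)) →L[ℝ] ℝ) :
    ‖L.comp (ContinuousLinearMap.inr ℝ E E)‖ ≤ ‖L‖ := by
  refine ContinuousLinearMap.opNorm_le_bound _ (norm_nonneg L) fun z => ?_
  have h : (L.comp (ContinuousLinearMap.inr ℝ E E)) z = L ((0 : E), z) := rfl
  rw [h]
  calc ‖L ((0 : E), z)‖ ≤ ‖L‖ * ‖((0 : E), z)‖ := L.le_opNorm _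
    _ = ‖L‖ * ‖z‖ := by rw [Prod.norm_def]; simp

private lemma comp_inl_norm (L : (EuclideanSpace ℝ (Fin m) × EuclideanSpace ℝ (Fin m)) →L[ℝ] ℝ) :
    ‖L.comp (ContinuousLinearMap.inl ℝ E E)‖ ≤ ‖L‖ := by
  refine ContinuousLinearMap.opNorm_le_bound _ (norm_nonneg L) fun z => ?_
  have h : (L.comp (ContinuousLinearMap.inl ℝ E E)) z = L (z, (0 : E)) := rfl
  rw [h]
  calc ‖L (z, (0 : E))‖ ≤ ‖L‖ * ‖(z, (0 : E))‖ := L.le_opNorm _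
    _ = ‖L‖ * ‖z‖ := by rw [Prod.norm_def]; simp

private lemma gradr_eq (f : EuclideanSpace ℝ (Fin m) × EuclideanSpace ℝ (Fin m) → ℝ)
    (hf : ContDiff ℝ 2 f) (p q : EuclideanSpace ℝ (Fin m)) :
    gradient (fun z => f (p, z)) q =
      (InnerProductSpace.toDual ℝ E).symm
        ((fderiv ℝ f (p, q)).comp (ContinuousLinearMap.inr ℝ E E)) := by
  have hd : HasFDerivAt (fun z : E => f (p, z))
      ((fderiv ℝ f (p, q)).comp (ContinuousLinearMap.inr ℝ E E)) q :=
    ((hf.differentiable two_ne_zero) (p, q)).hasFDerivAt.comp q (hasFDerivAt_prodMk_right p q)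
  rw [gradient, hd.fderiv]

private lemma gradl_eq (f : EuclideanSpace ℝ (Fin m) × EuclideanSpace ℝ (Fin m) → ℝ)
    (hf : ContDiff ℝ 2 f) (p q : EuclideanSpace ℝ (Fin m)) :
    gradient (fun z => f (z, q)) p =
      (InnerProductSpace.toDual ℝ E).symm
        ((fderiv ℝ f (p, q)).comp (ContinuousLinearMap.inl ℝ E E)) := by
  have hd : HasFDerivAt (fun z : E => f (z, q))
      ((fderiv ℝ f (p, q)).comp (ContinuousLinearMap.inl ℝ E E)) p :=
    ((hf.differentiable two_ne_zero) (p, q)).hasFDerivAt.comp p (hasFDerivAt_prodMk_left p q)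
  rw [gradient, hd.fderiv]

private lemma gradr_norm (f : EuclideanSpace ℝ (Fin m) × EuclideanSpace ℝ (Fin m) → ℝ)
    (hf : ContDiff ℝ 2 f) {ε : ℝ} (hb : ∀ z, ‖fderiv ℝ f z‖ ≤ ε)
    (p q : EuclideanSpace ℝ (Fin m)) :
    ‖gradient (fun z => f (p, z)) q‖ ≤ ε := by
  rw [gradr_eq f hf p q, LinearIsometryEquiv.norm_map]
  exact (comp_inr_norm _).trans (hb _)

private lemma gradl_norm (f : EuclideanSpace ℝ (Fin m) × EuclideanSpace ℝ (Fin m) → ℝ)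
    (hf : ContDiff ℝ 2 f) {ε : ℝ} (hb : ∀ z, ‖fderiv ℝ f z‖ ≤ ε)
    (p q : EuclideanSpace ℝ (Fin m)) :
    ‖gradient (fun z => f (z, q)) p‖ ≤ ε := by
  rw [gradl_eq f hf p q, LinearIsometryEquiv.norm_map]
  exact (comp_inl_norm _).trans (hb _)

private lemma fderiv_lip (f : EuclideanSpace ℝ (Fin m) × EuclideanSpace ℝ (Fin m) → ℝ)
    (hf : ContDiff ℝ 2 f) {ε : ℝ}
    (hb : ∀ z, ‖fderiv ℝ (fderiv ℝ f) z‖ ≤ ε)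
    (z w : EuclideanSpace ℝ (Fin m) × EuclideanSpace ℝ (Fin m)) :
    ‖fderiv ℝ f z - fderiv ℝ f w‖ ≤ ε * ‖z - w‖ := by
  have hdf : ContDiff ℝ 1 (fderiv ℝ f) := hf.fderiv_right (by norm_num)
  exact convex_univ.norm_image_sub_le_of_norm_fderiv_le
    (fun x _ => (hdf.differentiable one_ne_zero).differentiableAt)
    (fun x _ => hb x) (Set.mem_univ w) (Set.mem_univ z)

private lemma gradr_lip (f : EuclideanSpace ℝ (Fin m) × EuclideanSpace ℝ (Fin m) → ℝ)
    (hf : ContDiff ℝ 2 f) {ε : ℝ} (hε : 0 ≤ ε)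
    (hb : ∀ z, ‖fderiv ℝ (fderiv ℝ f) z‖ ≤ ε)
    (p q p' q' : EuclideanSpace ℝ (Fin m)) {b : ℝ}
    (h1 : ‖p - p'‖ ≤ b) (h2 : ‖q - q'‖ ≤ b) :
    ‖gradient (fun z => f (p, z)) q - gradient (fun z => f (p', z)) q'‖ ≤ ε * b := by
  rw [gradr_eq f hf p q, gradr_eq f hf p' q', ← map_sub, LinearIsometryEquiv.norm_map,
    ← ContinuousLinearMap.sub_comp]
  refine (comp_inr_norm _).trans ?_
  refine (fderiv_lip f hf hb (p, q) (p', q')).trans ?_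
  refine mul_le_mul_of_nonneg_left ?_ hε
  rw [Prod.norm_def]
  exact max_le h1 h2

private lemma gradl_lip (f : EuclideanSpace ℝ (Fin m) × EuclideanSpace ℝ (Fin m) → ℝ)
    (hf : ContDiff ℝ 2 f) {ε : ℝ} (hε : 0 ≤ ε)
    (hb : ∀ z, ‖fderiv ℝ (fderiv ℝ f) z‖ ≤ ε)
    (p q p' q' : EuclideanSpace ℝ (Fin m)) {b : ℝ}
    (h1 : ‖p - p'‖ ≤ b) (h2 : ‖q - q'‖ ≤ b) :
    ‖gradient (fun z => f (z, q)) p - gradient (fun z => f (z, q')) p'‖ ≤ ε * b := by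
  rw [gradl_eq f hf p q, gradl_eq f hf p' q', ← map_sub, LinearIsometryEquiv.norm_map,
    ← ContinuousLinearMap.sub_comp]
  refine (comp_inl_norm _).trans ?_
  refine (fderiv_lip f hf hb (p, q) (p', q')).trans ?_
  refine mul_le_mul_of_nonneg_left ?_ hε
  rw [Prod.norm_def]
  exact max_le h1 h2

end Helpers

set_option maxHeartbeats 1000000 in
/-- Quantitative contraction step of the general anti-integrable limit theorem:
the operator `Φ` built from uniformly Lipschitz local inverses `φ_i` and `C²`-small
couplings `u_i` maps the `2λε`-ball around the code `a` (sup metric) into itself,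
is a `2λε`-contraction there, and hence has a unique fixed point (the shadowing
trajectory). -/
theorem anti_integrable_contraction
    (m : ℕ) (a : ℤ → EuclideanSpace ℝ (Fin m))
    (r ε lam : ℝ) (hr : 0 < r) (hε : 0 ≤ ε) (hlam : 0 < lam)
    (φ : ℤ → EuclideanSpace ℝ (Fin m) → EuclideanSpace ℝ (Fin m))
    (hφlip : ∀ i, LipschitzWith (Real.toNNReal lam) (φ i))
    (hφ0 : ∀ i, φ i 0 = a i)
    (u : ℤ → EuclideanSpace ℝ (Fin m) × EuclideanSpace ℝ (Fin m) → ℝ)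
    (hu : ∀ i, ContDiff ℝ 2 (u i))
    (huC2 : ∀ i z, |u i z| ≤ ε ∧ ‖fderiv ℝ (u i) z‖ ≤ ε ∧
      ‖fderiv ℝ (fderiv ℝ (u i)) z‖ ≤ ε)
    (Φ : (ℤ → EuclideanSpace ℝ (Fin m)) → ℤ → EuclideanSpace ℝ (Fin m))
    (hΦ : ∀ x i, Φ x i = φ i
      (gradient (fun z => u (i - 1) (x (i - 1), z)) (x i) +
       gradient (fun z => u i (z, x (i + 1))) (x i)))
    (hsmall1 : 2 * lam * ε < r) (hsmall2 : 2 * lam * ε < 1) :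
    (∀ x, (∀ i, ‖x i - a i‖ ≤ 2 * lam * ε) → ∀ i, ‖Φ x i - a i‖ ≤ 2 * lam * ε) ∧
    (∀ x x', (∀ i, ‖x i - a i‖ ≤ 2 * lam * ε) → (∀ i, ‖x' i - a i‖ ≤ 2 * lam * ε) →
      ∀ b : ℝ, 0 ≤ b → (∀ i, ‖x i - x' i‖ ≤ b) →
        ∀ i, ‖Φ x i - Φ x' i‖ ≤ (2 * lam * ε) * b) ∧
    (∃! xs : ℤ → EuclideanSpace ℝ (Fin m),
      (∀ i, ‖xs i - a i‖ ≤ 2 * lam * ε) ∧ ∀ i, Φ xs i = xs i) := by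
  set c : ℝ := 2 * lam * ε with hc
  have hc0 : 0 ≤ c := by positivity
  -- Part 1: self-mapping
  have part1 : ∀ x, (∀ i, ‖x i - a i‖ ≤ c) → ∀ i, ‖Φ x i - a i‖ ≤ c := by
    intro x _ i
    rw [hΦ, ← hφ0 i]
    have hlip := (hφlip i).dist_le_mul
      (gradient (fun z => u (i - 1) (x (i - 1), z)) (x i) +
        gradient (fun z => u i (z, x (i + 1))) (x i)) 0
    rw [dist_eq_norm, dist_eq_norm, sub_zero, Real.coe_toNNReal _ hlam.le] at hlip
    refine hlip.trans ?_
    have h1 : ‖gradient (fun z => u (i - 1) (x (i - 1), z)) (x i)‖ ≤ ε :=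
      gradr_norm _ (hu (i - 1)) (fun z => (huC2 (i - 1) z).2.1) _ _
    have h2 : ‖gradient (fun z => u i (z, x (i + 1))) (x i)‖ ≤ ε :=
      gradl_norm _ (hu i) (fun z => (huC2 i z).2.1) _ _
    have := norm_add_le_of_le h1 h2
    calc lam * ‖gradient (fun z => u (i - 1) (x (i - 1), z)) (x i) +
          gradient (fun z => u i (z, x (i + 1))) (x i)‖
        ≤ lam * (ε + ε) := by nlinarith [norm_add_le_of_le h1 h2]
      _ = c := by ring
  -- Part 2: contraction
  have part2 : ∀ x x', (∀ i, ‖x i - a i‖ ≤ c) → (∀ i, ‖x' i - a i‖ ≤ c) →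
      ∀ b : ℝ, 0 ≤ b → (∀ i, ‖x i - x' i‖ ≤ b) →
        ∀ i, ‖Φ x i - Φ x' i‖ ≤ c * b := by
    intro x x' _ _ b hb hxb i
    rw [hΦ, hΦ]
    have hlip := (hφlip i).dist_le_mul
      (gradient (fun z => u (i - 1) (x (i - 1), z)) (x i) +
        gradient (fun z => u i (z, x (i + 1))) (x i))
      (gradient (fun z => u (i - 1) (x' (i - 1), z)) (x' i) +
        gradient (fun z => u i (z, x' (i + 1))) (x' i))
    rw [dist_eq_norm, dist_eq_norm, Real.coe_toNNReal _ hlam.le] at hlip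
    refine hlip.trans ?_
    have h1 : ‖gradient (fun z => u (i - 1) (x (i - 1), z)) (x i) -
        gradient (fun z => u (i - 1) (x' (i - 1), z)) (x' i)‖ ≤ ε * b :=
      gradr_lip _ (hu (i - 1)) hε (fun z => (huC2 (i - 1) z).2.2) _ _ _ _
        (hxb (i - 1)) (hxb i)
    have h2 : ‖gradient (fun z => u i (z, x (i + 1))) (x i) -
        gradient (fun z => u i (z, x' (i + 1))) (x' i)‖ ≤ ε * b :=
      gradl_lip _ (hu i) hε (fun z => (huC2 i z).2.2) _ _ _ _
        (hxb i) (hxb (i + 1))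
    have hsum : ‖(gradient (fun z => u (i - 1) (x (i - 1), z)) (x i) +
          gradient (fun z => u i (z, x (i + 1))) (x i)) -
        (gradient (fun z => u (i - 1) (x' (i - 1), z)) (x' i) +
          gradient (fun z => u i (z, x' (i + 1))) (x' i))‖ ≤ ε * b + ε * b := by
      have := norm_add_le_of_le h1 h2
      calc _ = ‖(gradient (fun z => u (i - 1) (x (i - 1), z)) (x i) -
            gradient (fun z => u (i - 1) (x' (i - 1), z)) (x' i)) +
          (gradient (fun z => u i (z, x (i + 1))) (x i) -
            gradient (fun z => u i (z, x' (i + 1))) (x' i))‖ := by abel_nf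
        _ ≤ ε * b + ε * b := norm_add_le_of_le h1 h2
    calc lam * _ ≤ lam * (ε * b + ε * b) :=
          mul_le_mul_of_nonneg_left hsum hlam.le
      _ = c * b := by ring
  refine ⟨part1, part2, ?_⟩
  -- Part 3: unique fixed point via Banach on bounded functions
  classical
  -- the closed ball of radius c around 0 in ℤ →ᵇ (EuclideanSpace ℝ (Fin m))
  set K := Metric.closedBall (0 : BoundedContinuousFunction ℤ (EuclideanSpace ℝ (Fin m))) c with hK
  haveI : CompleteSpace K := Metric.isClosed_closedBall.completeSpace_coe
  have hmemK : ∀ y : BoundedContinuousFunction ℤ (EuclideanSpace ℝ (Fin m)), y ∈ K → ∀ i, ‖y i - 0‖ ≤ c := by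
    intro y hy i
    have := BoundedContinuousFunction.dist_coe_le_dist (f := y)
      (g := (0 : BoundedContinuousFunction ℤ (EuclideanSpace ℝ (Fin m)))) i
    rw [Metric.mem_closedBall] at hy
    simpa [dist_eq_norm] using this.trans hy
  -- build T : K → K
  have hTdef : ∀ y : K, ∃ g : BoundedContinuousFunction ℤ (EuclideanSpace ℝ (Fin m)),
      (∀ i, g i = Φ (fun j => a j + (y : BoundedContinuousFunction ℤ (EuclideanSpace ℝ (Fin m))) j) i - a i) ∧
      g ∈ K := by
    intro y
    set x : ℤ → (EuclideanSpace ℝ (Fin m)) := fun j => a j + (y : BoundedContinuousFunction ℤ (EuclideanSpace ℝ (Fin m))) j with hx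
    have hxball : ∀ i, ‖x i - a i‖ ≤ c := by
      intro i
      have h := hmemK y y.2 i
      rw [sub_zero] at h
      show ‖a i + (y : BoundedContinuousFunction ℤ (EuclideanSpace ℝ (Fin m))) i - a i‖ ≤ c
      rwa [add_sub_cancel_left]
    refine ⟨BoundedContinuousFunction.ofNormedAddCommGroup
      (fun i => Φ x i - a i) (continuous_of_discreteTopology) c
      (fun i => part1 x hxball i), fun i => rfl, ?_⟩
    rw [Metric.mem_closedBall]
    refine (BoundedContinuousFunction.dist_le hc0).2 fun i => ?_
    simpa [dist_eq_norm] using part1 x hxball i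
  choose T hT1 hT2 using hTdef
  set T' : K → K := fun y => ⟨T y, hT2 y⟩ with hT'
  have hcontr : ContractingWith (Real.toNNReal c) T' := by
    constructor
    · rwa [← NNReal.coe_lt_one, Real.coe_toNNReal _ hc0]
    · refine LipschitzWith.of_dist_le_mul fun y y' => ?_
      rw [Real.coe_toNNReal _ hc0]
      have hd : dist (T' y) (T' y') = dist (T y) (T y') := rfl
      rw [hd, Subtype.dist_eq]
      refine (BoundedContinuousFunction.dist_le (by positivity)).2 fun i => ?_
      set x : ℤ → (EuclideanSpace ℝ (Fin m)) := fun j => a j + (y : BoundedContinuousFunction ℤ (EuclideanSpace ℝ (Fin m))) j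
      set x' : ℤ → (EuclideanSpace ℝ (Fin m)) := fun j => a j + (y' : BoundedContinuousFunction ℤ (EuclideanSpace ℝ (Fin m))) j
      have hxball : ∀ i, ‖x i - a i‖ ≤ c := fun i => by
        have h := hmemK y y.2 i
        rw [sub_zero] at h
        show ‖a i + (y : BoundedContinuousFunction ℤ (EuclideanSpace ℝ (Fin m))) i - a i‖ ≤ c
        rwa [add_sub_cancel_left]
      have hx'ball : ∀ i, ‖x' i - a i‖ ≤ c := fun i => by
        have h := hmemK y' y'.2 i
        rw [sub_zero] at h
        show ‖a i + (y' : BoundedContinuousFunction ℤ (EuclideanSpace ℝ (Fin m))) i - a i‖ ≤ c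
        rwa [add_sub_cancel_left]
      set b : ℝ := dist ((y : BoundedContinuousFunction ℤ (EuclideanSpace ℝ (Fin m))))
        ((y' : BoundedContinuousFunction ℤ (EuclideanSpace ℝ (Fin m)))) with hbdef
      have hb0 : 0 ≤ b := dist_nonneg
      have hxb : ∀ j, ‖x j - x' j‖ ≤ b := by
        intro j
        have := BoundedContinuousFunction.dist_coe_le_dist
          (f := (y : BoundedContinuousFunction ℤ (EuclideanSpace ℝ (Fin m))))
          (g := (y' : BoundedContinuousFunction ℤ (EuclideanSpace ℝ (Fin m)))) j
        rw [dist_eq_norm] at this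
        show ‖(a j + (y : BoundedContinuousFunction ℤ (EuclideanSpace ℝ (Fin m))) j) -
          (a j + (y' : BoundedContinuousFunction ℤ (EuclideanSpace ℝ (Fin m))) j)‖ ≤ b
        rwa [add_sub_add_left_eq_sub]
      have := part2 x x' hxball hx'ball b hb0 hxb i
      rw [dist_eq_norm, hT1 y i, hT1 y' i]
      have heq : Φ x i - a i - (Φ x' i - a i) = Φ x i - Φ x' i := by abel
      rw [heq]
      exact this
  haveI : Nonempty K := ⟨⟨0, Metric.mem_closedBall.2 (by rw [dist_self]; exact hc0)⟩⟩
  set yfix := ContractingWith.fixedPoint T' hcontr with hyfix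
  have hfixed : T' yfix = yfix := hcontr.fixedPoint_isFixedPt
  set xs : ℤ → (EuclideanSpace ℝ (Fin m)) := fun j => a j + (yfix : BoundedContinuousFunction ℤ (EuclideanSpace ℝ (Fin m))) j with hxs
  have hxsball : ∀ i, ‖xs i - a i‖ ≤ c := fun i => by
    have h := hmemK _ yfix.2 i
    rw [sub_zero] at h
    show ‖a i + (yfix : BoundedContinuousFunction ℤ (EuclideanSpace ℝ (Fin m))) i - a i‖ ≤ c
    rwa [add_sub_cancel_left]
  have hxsfix : ∀ i, Φ xs i = xs i := by
    intro i
    have h1 := hT1 yfix i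
    have h2 : (T yfix) i = (yfix : BoundedContinuousFunction ℤ (EuclideanSpace ℝ (Fin m))) i := by
      have : ((T' yfix : K) : BoundedContinuousFunction ℤ (EuclideanSpace ℝ (Fin m))) =
        (yfix : BoundedContinuousFunction ℤ (EuclideanSpace ℝ (Fin m))) := by rw [hfixed]
      exact congrFun (congrArg _ this) i
    have : Φ xs i - a i = (yfix : BoundedContinuousFunction ℤ (EuclideanSpace ℝ (Fin m))) i := by
      rw [← h2, h1]
    have := congrArg (fun v => a i + v) this
    simpa [sub_eq_iff_eq_add, hxs] using this
  refine ⟨xs, ⟨hxsball, hxsfix⟩, ?_⟩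
  -- uniqueness
  intro xs' ⟨hball', hfix'⟩
  set y' : BoundedContinuousFunction ℤ (EuclideanSpace ℝ (Fin m)) :=
    BoundedContinuousFunction.ofNormedAddCommGroup (fun i => xs' i - a i)
      continuous_of_discreteTopology c (fun i => hball' i) with hy'
  have hy'K : y' ∈ K := by
    rw [Metric.mem_closedBall]
    refine (BoundedContinuousFunction.dist_le hc0).2 fun i => ?_
    simpa [hy', dist_eq_norm] using hball' i
  have hxs'eq : (fun j => a j + y' j) = xs' := by
    funext j
    simp [hy']
  have hfixy' : T' ⟨y', hy'K⟩ = ⟨y', hy'K⟩ := by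
    apply Subtype.ext
    apply BoundedContinuousFunction.ext
    intro i
    have h1 := hT1 ⟨y', hy'K⟩ i
    simp only at h1
    rw [h1]
    show Φ (fun j => a j + y' j) i - a i = xs' i - a i
    rw [hxs'eq, hfix' i]
  have := hcontr.fixedPoint_unique hfixy'
  funext i
  have hcoe : (y' : ℤ → (EuclideanSpace ℝ (Fin m))) i = (yfix : BoundedContinuousFunction ℤ (EuclideanSpace ℝ (Fin m))) i := by
    have : ((⟨y', hy'K⟩ : K) : BoundedContinuousFunction ℤ (EuclideanSpace ℝ (Fin m))) =
      (yfix : BoundedContinuousFunction ℤ (EuclideanSpace ℝ (Fin m))) := by rw [this]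
    exact congrFun (congrArg _ this) i
  have : xs' i - a i = (yfix : BoundedContinuousFunction ℤ (EuclideanSpace ℝ (Fin m))) i := by
    simpa [hy'] using hcoe
  rw [hxs]
  simp [← this]
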